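/- arXiv:2512.00202 — 3 statements merged into one kernel-verified Lean document; each statement's English description precedes it below -/
import Mathlib

section
/- Let V be a finite-dimensional complex vector space and let B be a nondegenerate alternating bilinear form on V. Then there is no nilpotent endomorphism w of V with rank(w) = 2 and w² ≠ 0 satisfying B(w·v₁, v₂) + B(v₁, w·v₂) = 0 for all v₁, v₂ ∈ V. -/
noncomputable section

theorem no_rank_two_nilpotent_in_symplectic_stmt17
    (V : Type) [AddCommGroup V] [Module ℂ V] [FiniteDimensional ℂ V]
    (B : V →ₗ[ℂ] V →ₗ[ℂ] ℂ)
    -- `B` is alternating and nondegenerate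
    (halt : ∀ v, B v v = 0)
    (hnd : ∀ u, (∀ v, B u v = 0) → u = 0) :
    ¬ ∃ w : Module.End ℂ V, IsNilpotent w ∧ Module.finrank ℂ (LinearMap.range w) = 2 ∧
        w ^ 2 ≠ 0 ∧ ∀ v₁ v₂, B (w v₁) v₂ + B v₁ (w v₂) = 0 := by
  rintro ⟨w, hnil, hrk, hw2, hskew⟩
  -- antisymmetry of B
  have hanti : ∀ u v, B u v = - B v u := by
    intro u v
    have h := halt (u + v)
    simp only [map_add, LinearMap.add_apply, halt] at h
    linear_combination h
  have hsk : ∀ x y, B (w x) y = - B x (w y) := by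
    intro x y
    have := hskew x y
    linear_combination this
  -- w² is self-adjoint
  have h2adj : ∀ x y, B ((w ^ 2) x) y = B x ((w ^ 2) y) := by
    intro x y
    have h1 : (w ^ 2) x = w (w x) := by simp [pow_two]
    have h2 : (w ^ 2) y = w (w y) := by simp [pow_two]
    rw [h1, h2, hsk, hsk, neg_neg]
  -- range w² ≤ range w
  have hle : LinearMap.range (w ^ 2) ≤ LinearMap.range w := by
    rw [pow_two]
    rintro x ⟨y, rfl⟩
    exact ⟨w y, rfl⟩
  -- range w² ≠ range w, else nilpotency contradicts rank 2
  have hne : LinearMap.range (w ^ 2) ≠ LinearMap.range w := by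
    intro heq
    have key : ∀ n : ℕ, LinearMap.range (w ^ (n + 1)) = LinearMap.range w := by
      intro n
      induction n with
      | zero => simp
      | succ n ih =>
        have h3 : w ^ (n + 2) = w ∘ₗ w ^ (n + 1) := by
          rw [← Module.End.mul_eq_comp, ← pow_succ']
        rw [h3, LinearMap.range_comp, ih]
        have h2 : w ^ 2 = w ∘ₗ w := by rw [pow_two, Module.End.mul_eq_comp]
        rw [← LinearMap.range_comp, ← h2, heq]
    obtain ⟨k, hk⟩ := hnil
    have hkk : LinearMap.range (w ^ (k + 1)) = LinearMap.range w := key k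
    rw [pow_succ, hk, zero_mul] at hkk
    simp only [LinearMap.range_zero] at hkk
    rw [← hkk] at hrk
    simp at hrk
  -- hence finrank range w² = 1
  have hfin2 : Module.finrank ℂ (LinearMap.range (w ^ 2)) ≤ 2 := by
    calc Module.finrank ℂ (LinearMap.range (w ^ 2))
        ≤ Module.finrank ℂ (LinearMap.range w) := Submodule.finrank_mono hle
      _ = 2 := hrk
  have hfinne : Module.finrank ℂ (LinearMap.range (w ^ 2)) ≠ 2 := by
    intro h
    exact hne (Submodule.eq_of_le_of_finrank_eq hle (h.trans hrk.symm))
  have hbot : LinearMap.range (w ^ 2) ≠ ⊥ := by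
    simpa [LinearMap.range_eq_bot] using hw2
  have hfin0 : Module.finrank ℂ (LinearMap.range (w ^ 2)) ≠ 0 := by
    intro h
    exact hbot (Submodule.finrank_eq_zero.mp h)
  have hone : Module.finrank ℂ (LinearMap.range (w ^ 2)) = 1 := by omega
  obtain ⟨v₀, hv₀⟩ : ∃ v, (w ^ 2) v ≠ 0 := by
    by_contra h
    push_neg at h
    exact hw2 (LinearMap.ext h)
  set e := (w ^ 2) v₀ with he
  have hemem : e ∈ LinearMap.range (w ^ 2) := ⟨v₀, rfl⟩
  have hspan : (Submodule.span ℂ {e}) = LinearMap.range (w ^ 2) := by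
    apply Submodule.eq_of_le_of_finrank_eq
    · rwa [Submodule.span_singleton_le_iff_mem]
    · rw [finrank_span_singleton hv₀, hone]
  -- B v₀ e = 0
  have hv0e : B v₀ e = 0 := by
    have h1 := h2adj v₀ v₀
    simp only [← he] at h1
    have h2 := hanti e v₀
    linear_combination (h2 - h1) / 2
  -- B e z = 0 for all z
  have hez : ∀ z, B e z = 0 := by
    intro z
    have hmem : (w ^ 2) z ∈ Submodule.span ℂ {e} := by
      rw [hspan]; exact ⟨z, rfl⟩
    obtain ⟨c, hc⟩ := Submodule.mem_span_singleton.mp hmem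
    have h3 := h2adj v₀ z
    simp only [← he] at h3
    rw [← hc] at h3
    rw [h3, map_smul, smul_eq_mul, hv0e, mul_zero]
  exact hv₀ (hnd e hez)
end
end

section
/- Let K ⊆ L be number fields, let n be a positive integer, and let 𝔥 be a K-Lie subalgebra of the n×n matrices over K (under the commutator bracket). Suppose there is a symmetric invertible n×n matrix M over L such that the L-linear span of the image of 𝔥 in the n×n matrices over L equals {x : x is an n×n matrix over L with M·x + xᵀ·M = 0}. Then there is a symmetric invertible n×n matrix M' over K such that 𝔥 = {x : x is an n×n matrix over K with M'·x + xᵀ·M' = 0}. -/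
noncomputable section

open Matrix

variable {K L : Type} [Field K] [Field L] [Algebra K L] {n : ℕ}

/-- entrywise application of a `K`-linear functional `L → K` to a matrix over `L`. -/
def lmap (f : L →ₗ[K] K) (N : Matrix (Fin n) (Fin n) L) : Matrix (Fin n) (Fin n) K :=
  Matrix.of fun i k => f (N i k)

lemma lmap_apply (f : L →ₗ[K] K) (N : Matrix (Fin n) (Fin n) L) (i k : Fin n) :
    lmap f N i k = f (N i k) := rfl

lemma lmap_mul_map (f : L →ₗ[K] K) (N : Matrix (Fin n) (Fin n) L)
    (x : Matrix (Fin n) (Fin n) K) :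
    lmap f (N * x.map (algebraMap K L)) = lmap f N * x := by
  ext i k
  simp only [lmap_apply, Matrix.mul_apply, Matrix.map_apply]
  rw [map_sum]
  refine Finset.sum_congr rfl fun m _ => ?_
  rw [mul_comm, ← Algebra.smul_def, LinearMap.map_smul, smul_eq_mul, mul_comm]

lemma lmap_map_mul (f : L →ₗ[K] K) (N : Matrix (Fin n) (Fin n) L)
    (x : Matrix (Fin n) (Fin n) K) :
    lmap f (x.map (algebraMap K L) * N) = x * lmap f N := by
  ext i k
  simp only [lmap_apply, Matrix.mul_apply, Matrix.map_apply]
  rw [map_sum]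
  refine Finset.sum_congr rfl fun m _ => ?_
  rw [← Algebra.smul_def, LinearMap.map_smul, smul_eq_mul]

lemma lmap_transpose (f : L →ₗ[K] K) (N : Matrix (Fin n) (Fin n) L) :
    lmap f N.transpose = (lmap f N).transpose := rfl

lemma lmap_add (f : L →ₗ[K] K) (N N' : Matrix (Fin n) (Fin n) L) :
    lmap f (N + N') = lmap f N + lmap f N' := by
  ext i k; simp [lmap_apply]

lemma lmap_zero (f : L →ₗ[K] K) : lmap f (0 : Matrix (Fin n) (Fin n) L) = 0 := by
  ext i k; simp [lmap_apply]

lemma lmap_smul_map (f : L →ₗ[K] K) (c : L) (x : Matrix (Fin n) (Fin n) K) :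
    lmap f (c • x.map (algebraMap K L)) = f c • x := by
  ext i k
  simp only [lmap_apply, Matrix.smul_apply, Matrix.map_apply, smul_eq_mul]
  rw [mul_comm, ← Algebra.smul_def, LinearMap.map_smul, smul_eq_mul]
  exact mul_comm _ _

lemma lmap_sum (f : L →ₗ[K] K) {ι : Type*} (s : Finset ι)
    (g : ι → Matrix (Fin n) (Fin n) L) :
    lmap f (∑ j ∈ s, g j) = ∑ j ∈ s, lmap f (g j) := by
  ext i k
  simp only [lmap_apply, Finset.sum_apply, Matrix.sum_apply]
  rw [map_sum]

variable (F : Type) [Field F] (n : ℕ)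

/-- the orthogonal Lie algebra of `Q` as a submodule. -/
def soSub (Q : Matrix (Fin n) (Fin n) F) : Submodule F (Matrix (Fin n) (Fin n) F) where
  carrier := {x | Q * x + x.transpose * Q = 0}
  add_mem' := by
    intro a b ha hb
    simp only [Set.mem_setOf_eq] at *
    rw [mul_add, transpose_add, add_mul, add_add_add_comm, ha, hb, add_zero]
  zero_mem' := by simp
  smul_mem' := by
    intro c a ha
    simp only [Set.mem_setOf_eq] at *
    rw [transpose_smul, mul_smul_comm, smul_mul_assoc, ← smul_add, ha, smul_zero]

lemma mem_soSub {Q x : Matrix (Fin n) (Fin n) F} :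
    x ∈ soSub F n Q ↔ Q * x + x.transpose * Q = 0 := Iff.rfl

/-- skew-symmetric matrices. -/
def skwSub : Submodule F (Matrix (Fin n) (Fin n) F) where
  carrier := {x | x.transpose = -x}
  add_mem' := by
    intro a b ha hb
    simp only [Set.mem_setOf_eq] at *
    rw [transpose_add, ha, hb, neg_add]
  zero_mem' := by simp
  smul_mem' := by
    intro c a ha
    simp only [Set.mem_setOf_eq] at *
    rw [transpose_smul, ha, smul_neg]

lemma mem_skwSub {x : Matrix (Fin n) (Fin n) F} :
    x ∈ skwSub F n ↔ x.transpose = -x := Iff.rfl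

variable [CharZero F]

lemma skw_entry {x : Matrix (Fin n) (Fin n) F} (hx : x ∈ skwSub F n) (i j : Fin n) :
    x j i = - x i j := by
  have := congrFun (congrFun (mem_skwSub F n |>.mp hx) i) j
  simpa [Matrix.transpose_apply] using this

lemma skw_diag {x : Matrix (Fin n) (Fin n) F} (hx : x ∈ skwSub F n) (i : Fin n) :
    x i i = 0 := by
  have h := skw_entry F n hx i i
  have h2 : (2 : F) * x i i = 0 := by linear_combination h
  rcases mul_eq_zero.mp h2 with h3 | h3
  · exact absurd h3 two_ne_zero
  · exact h3

lemma finrank_skwSub :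
    Module.finrank F (skwSub F n) = Fintype.card {p : Fin n × Fin n // p.1 < p.2} := by
  have e : skwSub F n ≃ₗ[F] ({p : Fin n × Fin n // p.1 < p.2} → F) := by
    refine LinearEquiv.ofBijective
      (LinearMap.mk (AddHom.mk (fun (x : skwSub F n) (q : {p : Fin n × Fin n // p.1 < p.2}) =>
          (x : Matrix (Fin n) (Fin n) F) q.1.1 q.1.2) (fun a b => rfl)) (fun c a => rfl)) ⟨?_, ?_⟩
    · intro x y hxy
      have h : ∀ i j : Fin n, i < j →
          (x : Matrix (Fin n) (Fin n) F) i j = (y : Matrix (Fin n) (Fin n) F) i j := by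
        intro i j hij
        exact congrFun hxy ⟨(i, j), hij⟩
      ext i j
      rcases lt_trichotomy i j with hij | hij | hij
      · exact h i j hij
      · subst hij; rw [skw_diag F n x.2, skw_diag F n y.2]
      · rw [skw_entry F n x.2 j i, skw_entry F n y.2 j i, h j i hij]
    · intro f
      refine ⟨⟨Matrix.of fun i j => if h : i < j then f ⟨(i, j), h⟩
          else if h' : j < i then -f ⟨(j, i), h'⟩ else 0, ?_⟩, ?_⟩
      · rw [mem_skwSub]
        ext i j
        simp only [Matrix.transpose_apply, Matrix.neg_apply, Matrix.of_apply]
        rcases lt_trichotomy i j with hij | hij | hij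
        · rw [dif_neg (asymm hij), dif_pos hij, dif_pos hij]
        · subst hij; simp
        · rw [dif_pos hij, dif_neg (asymm hij), dif_pos hij, neg_neg]
      · funext q
        rcases q with ⟨⟨i, j⟩, hij⟩
        show (Matrix.of fun i j => if h : i < j then f ⟨(i, j), h⟩
          else if h' : j < i then -f ⟨(j, i), h'⟩ else 0 : Matrix (Fin n) (Fin n) F) i j
          = f ⟨(i, j), hij⟩
        simp only [Matrix.of_apply]
        rw [dif_pos hij]
  rw [e.finrank_eq, Module.finrank_pi]

lemma finrank_soSub (Q : Matrix (Fin n) (Fin n) F) (hs : Q.IsSymm) (hu : IsUnit Q) :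
    Module.finrank F (soSub F n Q) = Fintype.card {p : Fin n × Fin n // p.1 < p.2} := by
  have hdet : IsUnit Q.det := by
    rwa [← Matrix.isUnit_iff_isUnit_det]
  have e : soSub F n Q ≃ₗ[F] skwSub F n := by
    refine LinearEquiv.ofBijective
      (LinearMap.mk (AddHom.mk (fun (x : soSub F n Q) =>
        (⟨Q * (x : Matrix (Fin n) (Fin n) F), ?_⟩ : skwSub F n))
        (fun a b => ?_)) (fun c a => ?_)) ⟨?_, ?_⟩
    · rw [mem_skwSub, Matrix.transpose_mul, hs.eq]
      have := x.2
      rw [mem_soSub] at this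
      linear_combination (norm := module) this
    · ext i j
      show (Q * ((a : Matrix (Fin n) (Fin n) F) + b)) i j = _
      rw [mul_add]
      rfl
    · ext i j
      show (Q * (c • (a : Matrix (Fin n) (Fin n) F))) i j = _
      rw [mul_smul_comm]
      rfl
    · intro x y hxy
      have h : Q * (x : Matrix (Fin n) (Fin n) F) = Q * (y : Matrix (Fin n) (Fin n) F) :=
        congrArg Subtype.val hxy
      have := congrArg (fun z => Q⁻¹ * z) h
      simp only [← Matrix.mul_assoc, Matrix.nonsing_inv_mul Q hdet, Matrix.one_mul] at this
      exact Subtype.ext this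
    · intro y
      refine ⟨⟨Q⁻¹ * (y : Matrix (Fin n) (Fin n) F), ?_⟩, ?_⟩
      · rw [mem_soSub, ← Matrix.mul_assoc, Matrix.mul_nonsing_inv Q hdet, Matrix.one_mul,
          Matrix.transpose_mul, Matrix.transpose_nonsing_inv, hs.eq,
          (mem_skwSub F n).mp y.2, Matrix.neg_mul, Matrix.neg_mul, Matrix.mul_assoc,
          Matrix.nonsing_inv_mul Q hdet, Matrix.mul_one]
        exact add_neg_cancel _
      · apply Subtype.ext
        show Q * (Q⁻¹ * (y : Matrix (Fin n) (Fin n) F)) = _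
        rw [← Matrix.mul_assoc, Matrix.mul_nonsing_inv Q hdet, Matrix.one_mul]
  rw [e.finrank_eq, finrank_skwSub]

end

noncomputable section

attribute [local instance 100] LieRing.ofAssociativeRing

open Matrix

set_option maxHeartbeats 1000000 in
theorem orthogonal_descent_stmt18 (K L : Type) [Field K] [Field L]
    [NumberField K] [NumberField L] [Algebra K L]
    (n : ℕ) (hn : 0 < n)
    (𝔥 : LieSubalgebra K (Matrix (Fin n) (Fin n) K))
    (M : Matrix (Fin n) (Fin n) L) (hMsymm : M.IsSymm) (hMunit : IsUnit M)
    -- the `L`-span of the image of `𝔥` is the orthogonal Lie algebra of `M`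
    (hspan : (Submodule.span L
        ((fun x : Matrix (Fin n) (Fin n) K => x.map (algebraMap K L)) ''
          (𝔥 : Set (Matrix (Fin n) (Fin n) K))) : Set (Matrix (Fin n) (Fin n) L)) =
      {x | M * x + x.transpose * M = 0}) :
    ∃ M' : Matrix (Fin n) (Fin n) K, M'.IsSymm ∧ IsUnit M' ∧
      (𝔥 : Set (Matrix (Fin n) (Fin n) K)) = {x | M' * x + x.transpose * M' = 0} := by
  classical
  -- Step 0: every element of 𝔥 satisfies the orthogonality condition for M
  have hM0 : ∀ x ∈ 𝔥, M * x.map (algebraMap K L) + (x.map (algebraMap K L)).transpose * M = 0 := by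
    intro x hx
    have h1 : x.map (algebraMap K L) ∈ (Submodule.span L
        ((fun x : Matrix (Fin n) (Fin n) K => x.map (algebraMap K L)) ''
          (𝔥 : Set (Matrix (Fin n) (Fin n) K))) : Set (Matrix (Fin n) (Fin n) L)) :=
      Submodule.subset_span ⟨x, hx, rfl⟩
    rw [hspan] at h1
    exact h1
  -- a basis of L over K and coordinates of M
  let b := Module.Basis.ofVectorSpace K L
  let s : Finset ↥(Module.Basis.ofVectorSpaceIndex K L) :=
    Finset.univ.biUnion fun p : Fin n × Fin n => (b.repr (M p.1 p.2)).support
  have hsupp : ∀ i k : Fin n, (b.repr (M i k)).support ⊆ s := by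
    intro i k j hj
    exact Finset.mem_biUnion.mpr ⟨(i, k), Finset.mem_univ _, hj⟩
  let A : ↥(Module.Basis.ofVectorSpaceIndex K L) → Matrix (Fin n) (Fin n) K :=
    fun j => lmap (b.coord j) M
  have hAsymm : ∀ j, (A j).transpose = A j := by
    intro j
    show (lmap (b.coord j) M).transpose = lmap (b.coord j) M
    rw [← lmap_transpose, hMsymm.eq]
  have hAcond : ∀ j, ∀ x ∈ 𝔥, A j * x + x.transpose * A j = 0 := by
    intro j x hx
    have h3 : lmap (b.coord j) (M * x.map (algebraMap K L)
        + (x.map (algebraMap K L)).transpose * M) = A j * x + x.transpose * A j := by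
      rw [lmap_add, lmap_mul_map, ← Matrix.transpose_map, lmap_map_mul]
    rw [← h3, hM0 x hx, lmap_zero]
  have hMdecomp : ∀ i k : Fin n, M i k = ∑ j ∈ s, b.repr (M i k) j • b j := by
    intro i k
    rw [eq_comm]
    calc ∑ j ∈ s, b.repr (M i k) j • b j
        = (b.repr (M i k)).sum fun j c => c • b j :=
          (Finsupp.sum_of_support_subset _ (hsupp i k) (fun j c => c • b j) (fun j _ => zero_smul K (b j))).symm
      _ = M i k := by rw [← Finsupp.linearCombination_apply, b.linearCombination_repr]
  -- the determinant polynomial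
  let Pm : Matrix (Fin n) (Fin n) (MvPolynomial {j // j ∈ s} K) :=
    Matrix.of fun i k => ∑ j : {j // j ∈ s}, MvPolynomial.X j * MvPolynomial.C (A j.1 i k)
  have hPmapL : Pm.map (MvPolynomial.aeval fun j : {j // j ∈ s} => (b j.1 : L)) = M := by
    ext i k
    simp only [Pm, Matrix.map_apply, Matrix.of_apply, map_sum, _root_.map_mul,
      MvPolynomial.aeval_X, MvPolynomial.aeval_C]
    rw [hMdecomp i k, ← Finset.sum_coe_sort s (fun j => b.repr (M i k) j • b j)]
    refine Finset.sum_congr rfl fun j _ => ?_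
    rw [Algebra.smul_def, mul_comm]
    simp only [A, lmap_apply, Module.Basis.coord_apply]
  have hMdet : M.det ≠ 0 :=
    isUnit_iff_ne_zero.mp ((Matrix.isUnit_iff_isUnit_det M).mp hMunit)
  have hP : Pm.det ≠ 0 := by
    intro h
    apply hMdet
    have h2 := (MvPolynomial.aeval fun j : {j // j ∈ s} => (b j.1 : L)).map_det Pm
    rw [AlgHom.mapMatrix_apply, hPmapL, h, map_zero] at h2
    exact h2.symm
  have hex : ∃ a : {j // j ∈ s} → K, MvPolynomial.eval a Pm.det ≠ 0 := by
    by_contra h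
    push_neg at h
    exact hP (MvPolynomial.funext fun a => by rw [h a, map_zero])
  obtain ⟨a, ha⟩ := hex
  set M' : Matrix (Fin n) (Fin n) K := ∑ j : {j // j ∈ s}, a j • A j.1 with hM'
  have hPmapK : Pm.map (MvPolynomial.eval a) = M' := by
    ext i k
    simp only [Pm, Matrix.map_apply, Matrix.of_apply, map_sum, _root_.map_mul,
      MvPolynomial.eval_X, MvPolynomial.eval_C, hM', Matrix.sum_apply,
      Matrix.smul_apply, smul_eq_mul]
  have hM'det : M'.det ≠ 0 := by
    have h2 := (MvPolynomial.eval a).map_det Pm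
    rw [RingHom.mapMatrix_apply, hPmapK] at h2
    rw [← h2]
    exact ha
  have hM'symm : M'.IsSymm := by
    show M'.transpose = M'
    rw [hM', Matrix.transpose_sum]
    refine Finset.sum_congr rfl fun j _ => ?_
    rw [Matrix.transpose_smul, hAsymm]
  have hM'unit : IsUnit M' := (Matrix.isUnit_iff_isUnit_det M').mpr (isUnit_iff_ne_zero.mpr hM'det)
  have hM'cond : ∀ x ∈ 𝔥, M' * x + x.transpose * M' = 0 := by
    intro x hx
    rw [hM', Finset.sum_mul, Matrix.mul_sum, ← Finset.sum_add_distrib]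
    refine Finset.sum_eq_zero fun j _ => ?_
    rw [smul_mul_assoc, mul_smul_comm, ← smul_add, hAcond j.1 x hx, smul_zero]
  -- dimension count
  set d := Module.finrank K 𝔥.toSubmodule with hd
  let c : Module.Basis (Fin d) K 𝔥.toSubmodule := Module.finBasis K _
  let v : Fin d → Matrix (Fin n) (Fin n) K := fun i => (c i : Matrix (Fin n) (Fin n) K)
  have hv : LinearIndependent K v :=
    c.linearIndependent.map' 𝔥.toSubmodule.subtype (Submodule.ker_subtype _)
  have hvmem : ∀ i, v i ∈ 𝔥 := fun i => (c i).2
  have hvspan : Submodule.span K (Set.range v) = 𝔥.toSubmodule := by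
    have hr : Set.range v = 𝔥.toSubmodule.subtype '' Set.range c := (Set.range_comp _ _).symm ▸ rfl
    rw [hr, ← Submodule.map_span, c.span_eq, Submodule.map_top, Submodule.range_subtype]
  have hLi : LinearIndependent L fun i => (v i).map (algebraMap K L) := by
    rw [linearIndependent_iff']
    intro t g hg i hi
    have hall : ∀ j, b.coord j (g i) = 0 := by
      intro j
      have h1 : lmap (b.coord j) (∑ i' ∈ t, g i' • (v i').map (algebraMap K L)) = 0 := by
        rw [hg, lmap_zero]
      rw [lmap_sum] at h1
      have h2 : ∑ i' ∈ t, b.coord j (g i') • v i' = 0 := by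
        rw [← h1]
        exact Finset.sum_congr rfl fun i' _ => (lmap_smul_map _ _ _).symm
      exact linearIndependent_iff'.mp hv t (fun i' => b.coord j (g i')) h2 i hi
    have hz : b.repr (g i) = 0 := by
      ext j
      exact hall j
    exact b.repr.map_eq_zero_iff.mp hz
  have hspaneq : Submodule.span L
      ((fun x : Matrix (Fin n) (Fin n) K => x.map (algebraMap K L)) ''
        (𝔥 : Set (Matrix (Fin n) (Fin n) K)))
      = Submodule.span L (Set.range fun i => (v i).map (algebraMap K L)) := by
    apply le_antisymm
    · rw [Submodule.span_le]
      rintro y ⟨x, hx, rfl⟩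
      have hx' : x ∈ Submodule.span K (Set.range v) := by rw [hvspan]; exact hx
      refine Submodule.span_induction
        (p := fun z _ => z.map (algebraMap K L) ∈
          Submodule.span L (Set.range fun i => (v i).map (algebraMap K L)))
        ?_ ?_ ?_ ?_ hx'
      · rintro z ⟨i, rfl⟩
        exact Submodule.subset_span ⟨i, rfl⟩
      · show (0 : Matrix (Fin n) (Fin n) K).map (algebraMap K L) ∈ _
        rw [Matrix.map_zero _ (map_zero _)]
        exact Submodule.zero_mem _
      · intro p q hp' hq' hp hq
        show (p + q).map (algebraMap K L) ∈ _
        rw [Matrix.map_add _ (map_add _)]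
        exact Submodule.add_mem _ hp hq
      · intro k z hz' hz
        show (k • z).map (algebraMap K L) ∈ _
        have hmap : (k • z).map (algebraMap K L)
            = algebraMap K L k • z.map (algebraMap K L) := by
          ext i' k'
          simp only [Matrix.map_apply, Matrix.smul_apply, smul_eq_mul, _root_.map_mul]
        rw [hmap]
        exact Submodule.smul_mem _ _ hz
    · rw [Submodule.span_le]
      rintro y ⟨i, rfl⟩
      exact Submodule.subset_span ⟨v i, hvmem i, rfl⟩
  have hsoL : Submodule.span L
      ((fun x : Matrix (Fin n) (Fin n) K => x.map (algebraMap K L)) ''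
        (𝔥 : Set (Matrix (Fin n) (Fin n) K))) = soSub L n M :=
    SetLike.coe_injective (by rw [hspan]; rfl)
  have hrank : Module.finrank K 𝔥.toSubmodule = Module.finrank K (soSub K n M') := by
    have h1 : Module.finrank L
        (Submodule.span L (Set.range fun i => (v i).map (algebraMap K L))) = d := by
      rw [finrank_span_eq_card hLi, Fintype.card_fin]
    rw [finrank_soSub K n M' hM'symm hM'unit, ← finrank_soSub L n M hMsymm hMunit,
      ← hsoL, hspaneq, h1, hd]
  have hle : 𝔥.toSubmodule ≤ soSub K n M' := fun x hx => (mem_soSub K n).mpr (hM'cond x hx)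
  have heq : 𝔥.toSubmodule = soSub K n M' := Submodule.eq_of_le_of_finrank_eq hle hrank
  refine ⟨M', hM'symm, hM'unit, ?_⟩
  calc (𝔥 : Set (Matrix (Fin n) (Fin n) K)) = ↑𝔥.toSubmodule := rfl
    _ = ↑(soSub K n M') := by rw [heq]
    _ = {x | M' * x + x.transpose * M' = 0} := rfl

end
end

section
/- Let n ≥ 3 and let R be a quadratic form on ℝⁿ with polar form ⟨u, v⟩ := R(u + v) − R(u) − R(v). Let z, e, e₃, …, eₙ be a basis of ℝⁿ with R(z) = 0, ⟨z, e⟩ = 0, R(e) ≠ 0, and ⟨eᵢ, z⟩ ≠ 0 for some i ≥ 3. Define the linear endomorphism w of ℝⁿ by w·z = 0, w·e = ⟨e, e⟩·z, and w·eᵢ = ⟨eᵢ, e⟩·z − ⟨eᵢ, z⟩·e for 3 ≤ i ≤ n. Let A₁, …, A_{n−2} be a basis of the space of linear functionals on ℝⁿ vanishing on z and e. Then every quadratic form P on ℝⁿ satisfying P(exp(tw)·v) = P(v) for all t ∈ ℝ and v ∈ ℝⁿ can be written as P = a·R + Σ_{1 ≤ i ≤ j ≤ n−2} a_{ij}·Aᵢ·Aⱼ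 for some real numbers a and a_{ij}. -/
noncomputable section

open Finset

/-- auxiliary bilinear-ish sum -/
def Sq {n : ℕ} (p : Fin n → Fin n → ℝ) (u v : Fin n → ℝ) : ℝ :=
  ∑ i, ∑ j, p i j * u i * v j

lemma Sq_add_left {n : ℕ} (p : Fin n → Fin n → ℝ) (u u' v : Fin n → ℝ) :
    Sq p (u + u') v = Sq p u v + Sq p u' v := by
  simp only [Sq, Pi.add_apply, ← Finset.sum_add_distrib]
  exact Finset.sum_congr rfl fun i _ => Finset.sum_congr rfl fun j _ => by ring

lemma Sq_add_right {n : ℕ} (p : Fin n → Fin n → ℝ) (u v v' : Fin n → ℝ) :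
    Sq p u (v + v') = Sq p u v + Sq p u v' := by
  simp only [Sq, Pi.add_apply, ← Finset.sum_add_distrib]
  exact Finset.sum_congr rfl fun i _ => Finset.sum_congr rfl fun j _ => by ring

lemma Sq_sub_left {n : ℕ} (p : Fin n → Fin n → ℝ) (u u' v : Fin n → ℝ) :
    Sq p (u - u') v = Sq p u v - Sq p u' v := by
  simp only [Sq, Pi.sub_apply, ← Finset.sum_sub_distrib]
  exact Finset.sum_congr rfl fun i _ => Finset.sum_congr rfl fun j _ => by ring

lemma Sq_sub_right {n : ℕ} (p : Fin n → Fin n → ℝ) (u v v' : Fin n → ℝ) :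
    Sq p u (v - v') = Sq p u v - Sq p u v' := by
  simp only [Sq, Pi.sub_apply, ← Finset.sum_sub_distrib]
  exact Finset.sum_congr rfl fun i _ => Finset.sum_congr rfl fun j _ => by ring

lemma Sq_smul_left {n : ℕ} (p : Fin n → Fin n → ℝ) (c : ℝ) (u v : Fin n → ℝ) :
    Sq p (c • u) v = c * Sq p u v := by
  simp only [Sq, Pi.smul_apply, smul_eq_mul, Finset.mul_sum]
  exact Finset.sum_congr rfl fun i _ => Finset.sum_congr rfl fun j _ => by ring

lemma Sq_smul_right {n : ℕ} (p : Fin n → Fin n → ℝ) (c : ℝ) (u v : Fin n → ℝ) :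
    Sq p u (c • v) = c * Sq p u v := by
  simp only [Sq, Pi.smul_apply, smul_eq_mul, Finset.mul_sum]
  exact Finset.sum_congr rfl fun i _ => Finset.sum_congr rfl fun j _ => by ring

lemma Sq_zero_left {n : ℕ} (p : Fin n → Fin n → ℝ) (v : Fin n → ℝ) :
    Sq p 0 v = 0 := by
  simp [Sq]

lemma Sq_zero_right {n : ℕ} (p : Fin n → Fin n → ℝ) (v : Fin n → ℝ) :
    Sq p v 0 = 0 := by
  simp [Sq]

lemma Sq_sum_left {n : ℕ} (p : Fin n → Fin n → ℝ) {ι : Type*} (s : Finset ι)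
    (g : ι → Fin n → ℝ) (v : Fin n → ℝ) :
    Sq p (∑ i ∈ s, g i) v = ∑ i ∈ s, Sq p (g i) v := by
  induction s using Finset.cons_induction with
  | empty => simp [Sq_zero_left]
  | cons a s ha ih => rw [Finset.sum_cons, Finset.sum_cons, Sq_add_left, ih]

lemma Sq_sum_right {n : ℕ} (p : Fin n → Fin n → ℝ) {ι : Type*} (s : Finset ι)
    (g : ι → Fin n → ℝ) (v : Fin n → ℝ) :
    Sq p v (∑ i ∈ s, g i) = ∑ i ∈ s, Sq p v (g i) := by
  induction s using Finset.cons_induction with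
  | empty => simp [Sq_zero_right]
  | cons a s ha ih => rw [Finset.sum_cons, Finset.sum_cons, Sq_add_right, ih]

/-- symmetrized folding of a double sum -/
lemma sum_fold {m : ℕ} (f : Fin m → Fin m → ℝ) :
    ∑ i, ∑ j, f i j =
      ∑ i, ∑ j, if i ≤ j then (if i = j then f i i else f i j + f j i) else 0 := by
  have h1 : ∑ i, ∑ j, f i j =
      (∑ i, ∑ j, if i ≤ j then f i j else 0) + (∑ i, ∑ j, if j < i then f i j else 0) := by
    rw [← Finset.sum_add_distrib]
    refine Finset.sum_congr rfl fun i _ => ?_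
    rw [← Finset.sum_add_distrib]
    refine Finset.sum_congr rfl fun j _ => ?_
    rcases le_or_gt i j with h | h
    · simp [h, not_lt.2 h]
    · simp [h, not_le.2 h]
  have h2 : (∑ i, ∑ j, if j < i then f i j else 0) =
      ∑ i, ∑ j, if i < j then f j i else 0 := Finset.sum_comm
  rw [h1, h2, ← Finset.sum_add_distrib]
  refine Finset.sum_congr rfl fun i _ => ?_
  rw [← Finset.sum_add_distrib]
  refine Finset.sum_congr rfl fun j _ => ?_
  rcases lt_trichotomy i j with h | h | h
  · simp [h, h.le, h.ne]
  · subst h; simp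
  · simp [not_le.2 h, not_lt.2 h.le]

theorem invariant_quadratic_forms_stmt19 (m : ℕ) (hm : 1 ≤ m)
    -- `R` is a quadratic form on `ℝⁿ`, `n = m + 2 ≥ 3`
    (Amat : Matrix (Fin (m + 2)) (Fin (m + 2)) ℝ)
    (R : (Fin (m + 2) → ℝ) → ℝ)
    (hR : ∀ v, R v = ∑ i, ∑ j, Amat i j * v i * v j)
    -- the polar form of `R`
    (pol : (Fin (m + 2) → ℝ) → (Fin (m + 2) → ℝ) → ℝ)
    (hpol : ∀ u v, pol u v = R (u + v) - R u - R v)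
    -- `z, e, e₃, …, eₙ` is a basis of `ℝⁿ`
    (z e : Fin (m + 2) → ℝ) (E : Fin m → Fin (m + 2) → ℝ)
    (hbasis : LinearIndependent ℝ (Fin.cons z (Fin.cons e E) : Fin (m + 2) → Fin (m + 2) → ℝ) ∧
      Submodule.span ℝ
        (Set.range (Fin.cons z (Fin.cons e E) : Fin (m + 2) → Fin (m + 2) → ℝ)) = ⊤)
    (hRz : R z = 0) (hze : pol z e = 0) (hRe : R e ≠ 0)
    (hEz : ∃ i, pol (E i) z ≠ 0)
    -- the nilpotent endomorphism `w`, realized as a matrix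
    (w : Matrix (Fin (m + 2)) (Fin (m + 2)) ℝ)
    (hwz : w.mulVec z = 0)
    (hwe : w.mulVec e = pol e e • z)
    (hwE : ∀ i, w.mulVec (E i) = pol (E i) e • z - pol (E i) z • e)
    -- `A₁, …, A_{n-2}` is a basis of the linear functionals vanishing on `z` and `e`
    (A : Fin m → ((Fin (m + 2) → ℝ) →ₗ[ℝ] ℝ))
    (hAz : ∀ i, A i z = 0) (hAe : ∀ i, A i e = 0)
    (hAind : LinearIndependent ℝ A)
    (hAspan : ∀ φ : (Fin (m + 2) → ℝ) →ₗ[ℝ] ℝ, φ z = 0 → φ e = 0 →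
      φ ∈ Submodule.span ℝ (Set.range A)) :
    -- any quadratic form invariant under every `exp(tw)` lies in the pencil spanned by `R`
    -- and the products `AᵢAⱼ`
    ∀ (p : Fin (m + 2) → Fin (m + 2) → ℝ),
      (∀ (t : ℝ) (v : Fin (m + 2) → ℝ),
        (∑ i, ∑ j, p i j * (NormedSpace.exp (t • w)).mulVec v i *
            (NormedSpace.exp (t • w)).mulVec v j) =
          ∑ i, ∑ j, p i j * v i * v j) →
      ∃ (aa : ℝ) (c : Fin m → Fin m → ℝ), ∀ v : Fin (m + 2) → ℝ,
        (∑ i, ∑ j, p i j * v i * v j) =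
          aa * R v + ∑ i, ∑ j, if i ≤ j then c i j * A i v * A j v else 0 := by
  intro p hinv
  obtain ⟨Amat, hR⟩ : ∃ Amat : Fin (m + 2) → Fin (m + 2) → ℝ,
      ∀ v, R v = ∑ i, ∑ j, Amat i j * v i * v j := ⟨Amat, hR⟩
  obtain ⟨i0, hi0⟩ := hEz
  -- the basis
  let b : Module.Basis (Fin (m + 2)) ℝ (Fin (m + 2) → ℝ) := Module.Basis.mk hbasis.1 hbasis.2.ge
  have hb0 : b 0 = z := by
    show (Module.Basis.mk hbasis.1 hbasis.2.ge) 0 = z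
    rw [Module.Basis.coe_mk]; exact Fin.cons_zero _ _
  have hb1' : b ((0 : Fin (m + 1)).succ) = e := by
    show (Module.Basis.mk hbasis.1 hbasis.2.ge) ((0 : Fin (m + 1)).succ) = e
    rw [Module.Basis.coe_mk, Fin.cons_succ]; exact Fin.cons_zero _ _
  have hb1 : b 1 = e := by rw [← Fin.succ_zero_eq_one]; exact hb1'
  have hbE : ∀ i : Fin m, b i.succ.succ = E i := by
    intro i
    show (Module.Basis.mk hbasis.1 hbasis.2.ge) i.succ.succ = E i
    rw [Module.Basis.coe_mk, Fin.cons_succ, Fin.cons_succ]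
  have hv : ∀ v : Fin (m + 2) → ℝ, v = ∑ i, b.repr v i • b i := fun v => (b.sum_repr v).symm
  -- nilpotency
  have hw3 : w * w * w = 0 := by
    have hball : ∀ i : Fin (m + 2), (w * w * w).mulVec (b i) = 0 := by
      intro i
      refine Fin.cases ?_ (fun j => Fin.cases ?_ (fun k => ?_) j) i
      · rw [hb0, ← Matrix.mulVec_mulVec, ← Matrix.mulVec_mulVec, hwz]
        simp [Matrix.mulVec_zero]
      · rw [hb1', ← Matrix.mulVec_mulVec, ← Matrix.mulVec_mulVec, hwe, Matrix.mulVec_smul, hwz]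
        simp
      · rw [hbE, ← Matrix.mulVec_mulVec, ← Matrix.mulVec_mulVec, hwE]
        simp [Matrix.mulVec_sub, Matrix.mulVec_smul, Matrix.mulVec_neg, hwz, hwe, smul_smul]
    have hall : ∀ v, (w * w * w).mulVec v = 0 := by
      intro v
      conv_lhs => rw [hv v]
      rw [← Matrix.mulVecLin_apply, map_sum]
      refine Finset.sum_eq_zero fun i _ => ?_
      rw [map_smul, Matrix.mulVecLin_apply, hball i, smul_zero]
    ext i j
    simpa [Matrix.mulVec_single] using congrFun (hall (Pi.single j 1)) i
  have h3 : w ^ 3 = 0 := by rw [pow_succ, pow_two]; exact hw3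
  have hwk : ∀ nn : ℕ, 3 ≤ nn → w ^ nn = 0 := by
    intro nn h
    obtain ⟨k, rfl⟩ := Nat.exists_eq_add_of_le h
    rw [pow_add, h3, zero_mul]
  -- exponential formula
  have hexp : ∀ t : ℝ, NormedSpace.exp (t • w) = 1 + t • w + (t ^ 2 / 2) • (w * w) := by
    intro t
    have h0 := congrFun (NormedSpace.exp_eq_tsum (𝕂 := ℝ)
      (𝔸 := Matrix (Fin (m + 2)) (Fin (m + 2)) ℝ)) (t • w)
    rw [h0, tsum_eq_sum (s := Finset.range 3) (fun nn hn => ?_)]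
    · rw [Finset.sum_range_succ, Finset.sum_range_succ, Finset.sum_range_one]
      rw [pow_zero, pow_one, smul_pow]
      have h2 : w ^ 2 = w * w := pow_two w
      rw [h2]
      have hc : ((Nat.factorial 2 : ℝ))⁻¹ • (t ^ 2 • (w * w)) = (t ^ 2 / 2) • (w * w) := by
        rw [smul_smul]; congr 1; simp [Nat.factorial]; ring
      rw [hc]
      simp [Nat.factorial]
    · simp only [Finset.mem_range, not_lt] at hn
      rw [smul_pow, hwk nn hn, smul_zero, smul_zero]
  have hmul : ∀ (t : ℝ) (v : Fin (m + 2) → ℝ),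
      (NormedSpace.exp (t • w)).mulVec v =
        v + t • w.mulVec v + (t ^ 2 / 2) • w.mulVec (w.mulVec v) := by
    intro t v
    rw [hexp, Matrix.add_mulVec, Matrix.add_mulVec, Matrix.one_mulVec,
      Matrix.smul_mulVec, Matrix.smul_mulVec, ← Matrix.mulVec_mulVec]
  -- the derivative condition
  have key : ∀ v, Sq p (w.mulVec v) v + Sq p v (w.mulVec v) = 0 := by
    intro v
    have H : ∀ t : ℝ,
        Sq p (v + t • w.mulVec v + (t ^ 2 / 2) • w.mulVec (w.mulVec v))
          (v + t • w.mulVec v + (t ^ 2 / 2) • w.mulVec (w.mulVec v)) = Sq p v v := by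
      intro t
      have h := hinv t v
      rw [hmul t v] at h
      exact h
    have h1 := H 1
    have h2 := H (-1)
    have h3' := H 2
    have h4 := H (-2)
    simp only [Sq_add_left, Sq_add_right, Sq_smul_left, Sq_smul_right] at h1 h2 h3' h4
    linear_combination (2/3 : ℝ) * h1 - (2/3 : ℝ) * h2 - (1/12 : ℝ) * h3' + (1/12 : ℝ) * h4
  have key2 : ∀ u v, (Sq p (w.mulVec u) v + Sq p v (w.mulVec u)) +
      (Sq p (w.mulVec v) u + Sq p u (w.mulVec v)) = 0 := by
    intro u v
    have k := key (u + v)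
    rw [Matrix.mulVec_add] at k
    simp only [Sq_add_left, Sq_add_right] at k
    linear_combination k - key u - key v
  -- pol in terms of Sq
  have hRS : ∀ v, R v = Sq Amat v v := hR
  have pol_S : ∀ u v, pol u v = Sq Amat u v + Sq Amat v u := by
    intro u v
    rw [hpol]
    have h1 : R (u + v) = Sq Amat (u + v) (u + v) := hR _
    rw [h1, hRS u, hRS v, Sq_add_left, Sq_add_right, Sq_add_right]
    ring
  have pol_symm : ∀ u v, pol u v = pol v u := by
    intro u v; rw [pol_S, pol_S]; ring
  have hc0ne : pol e e ≠ 0 := by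
    rw [pol_S]
    intro h
    apply hRe
    rw [hRS]
    linarith
  -- basic relations
  have rel1 : Sq p z z = 0 := by
    have k := key2 z e
    rw [hwz, hwe] at k
    simp only [Sq_zero_left, Sq_zero_right, Sq_smul_left, Sq_smul_right, zero_add, add_zero] at k
    have h : pol e e * Sq p z z = 0 := by linarith
    exact (mul_eq_zero.1 h).resolve_left hc0ne
  have rel2 : Sq p e z + Sq p z e = 0 := by
    have k := key2 z (E i0)
    rw [hwz, hwE i0] at k
    simp only [Sq_zero_left, Sq_zero_right, Sq_sub_left, Sq_sub_right, Sq_smul_left,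
      Sq_smul_right, zero_add, add_zero] at k
    have h : pol (E i0) z * (Sq p e z + Sq p z e) = 0 := by
      linear_combination -k + 2 * pol (E i0) e * rel1
    exact (mul_eq_zero.1 h).resolve_left hi0
  have rel3 : ∀ i, pol e e * (Sq p z (E i) + Sq p (E i) z) = pol (E i) z * (2 * Sq p e e) := by
    intro i
    have k := key2 e (E i)
    rw [hwe, hwE i] at k
    simp only [Sq_sub_left, Sq_sub_right, Sq_smul_left, Sq_smul_right] at k
    linear_combination k - pol (E i) e * rel2
  have rel4 : ∀ i j,
      pol (E i) e * (Sq p z (E j) + Sq p (E j) z) - pol (E i) z * (Sq p e (E j) + Sq p (E j) e) +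
      pol (E j) e * (Sq p z (E i) + Sq p (E i) z) - pol (E j) z * (Sq p e (E i) + Sq p (E i) e)
        = 0 := by
    intro i j
    have k := key2 (E i) (E j)
    rw [hwE i, hwE j] at k
    simp only [Sq_sub_left, Sq_sub_right, Sq_smul_left, Sq_smul_right] at k
    linear_combination k
  -- the coefficient of R
  set aT : ℝ := 2 * Sq p e e / pol e e with haTdef
  have haT : aT * pol e e = 2 * Sq p e e := div_mul_cancel₀ _ hc0ne
  have hs : ∀ i, Sq p z (E i) + Sq p (E i) z = aT * pol (E i) z := by
    intro i
    have h : pol e e * ((Sq p z (E i) + Sq p (E i) z) - aT * pol (E i) z) = 0 := by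
      linear_combination rel3 i - pol (E i) z * haT
    have h2 := (mul_eq_zero.1 h).resolve_left hc0ne
    linarith
  have hTe_rel : ∀ i j,
      pol (E i) z * ((Sq p e (E j) + Sq p (E j) e) - aT * pol (E j) e) +
      pol (E j) z * ((Sq p e (E i) + Sq p (E i) e) - aT * pol (E i) e) = 0 := by
    intro i j
    linear_combination -rel4 i j + pol (E i) e * hs j + pol (E j) e * hs i
  have hTeE : ∀ j, (Sq p e (E j) + Sq p (E j) e) - aT * pol (E j) e = 0 := by
    have h0 : (Sq p e (E i0) + Sq p (E i0) e) - aT * pol (E i0) e = 0 := by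
      have h := hTe_rel i0 i0
      have h2 : pol (E i0) z * ((Sq p e (E i0) + Sq p (E i0) e) - aT * pol (E i0) e) = 0 := by
        linarith
      exact (mul_eq_zero.1 h2).resolve_left hi0
    intro j
    have h := hTe_rel i0 j
    have h2 : pol (E i0) z * ((Sq p e (E j) + Sq p (E j) e) - aT * pol (E j) e) = 0 := by
      linear_combination h - pol (E j) z * h0
    exact (mul_eq_zero.1 h2).resolve_left hi0
  -- base cases for the reduced form T
  have hAzz : Sq Amat z z = 0 := by
    have h := hR z
    rw [hRz] at h
    exact h.symm
  have hze' : Sq Amat z e + Sq Amat e z = 0 := by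
    have h := pol_S z e
    rw [hze] at h
    linarith
  have hpk : ∀ k, Sq Amat z (E k) + Sq Amat (E k) z = pol (E k) z := fun k =>
    (pol_S z (E k)).symm.trans (pol_symm z (E k))
  have base_z_z : (Sq p z z + Sq p z z) - aT * (Sq Amat z z + Sq Amat z z) = 0 := by
    linear_combination 2 * rel1 - 2 * aT * hAzz
  have base_z_e : (Sq p z e + Sq p e z) - aT * (Sq Amat z e + Sq Amat e z) = 0 := by
    linear_combination rel2 - aT * hze'
  have base_z_E : ∀ k, (Sq p z (E k) + Sq p (E k) z) -
      aT * (Sq Amat z (E k) + Sq Amat (E k) z) = 0 := by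
    intro k
    linear_combination hs k - aT * hpk k
  have base_e_e : (Sq p e e + Sq p e e) - aT * (Sq Amat e e + Sq Amat e e) = 0 := by
    linear_combination (-1 : ℝ) * haT + aT * pol_S e e
  have base_e_E : ∀ k, (Sq p e (E k) + Sq p (E k) e) -
      aT * (Sq Amat e (E k) + Sq Amat (E k) e) = 0 := by
    intro k
    linear_combination hTeE k - aT * pol_symm e (E k) + aT * pol_S e (E k)
  -- expansion lemmas
  have expand2 : ∀ u v', (Sq p u v' + Sq p v' u) - aT * (Sq Amat u v' + Sq Amat v' u) =
      ∑ i : Fin (m + 2), b.repr v' i *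
        ((Sq p u (b i) + Sq p (b i) u) - aT * (Sq Amat u (b i) + Sq Amat (b i) u)) := by
    intro u v'
    conv_lhs => rw [hv v']
    simp only [Sq_sum_left, Sq_sum_right, Sq_smul_left, Sq_smul_right, Finset.mul_sum,
      ← Finset.sum_add_distrib, ← Finset.sum_sub_distrib]
    exact Finset.sum_congr rfl fun i _ => by ring
  have hTzv : ∀ v', (Sq p z v' + Sq p v' z) - aT * (Sq Amat z v' + Sq Amat v' z) = 0 := by
    intro v'
    rw [expand2 z v']
    refine Finset.sum_eq_zero fun i _ => ?_
    refine Fin.cases ?_ (fun j => Fin.cases ?_ (fun k => ?_) j) i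
    · rw [hb0]; linear_combination (b.repr v' 0) * base_z_z
    · rw [hb1']; linear_combination (b.repr v' ((0 : Fin (m + 1)).succ)) * base_z_e
    · rw [hbE]; linear_combination (b.repr v' k.succ.succ) * base_z_E k
  have hTev : ∀ v', (Sq p e v' + Sq p v' e) - aT * (Sq Amat e v' + Sq Amat v' e) = 0 := by
    intro v'
    rw [expand2 e v']
    refine Finset.sum_eq_zero fun i _ => ?_
    refine Fin.cases ?_ (fun j => Fin.cases ?_ (fun k => ?_) j) i
    · rw [hb0]; linear_combination (b.repr v' 0) * base_z_e
    · rw [hb1']; linear_combination (b.repr v' ((0 : Fin (m + 1)).succ)) * base_e_e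
    · rw [hbE]; linear_combination (b.repr v' k.succ.succ) * base_e_E k
  have expand1 : ∀ u v', (Sq p u v' + Sq p v' u) - aT * (Sq Amat u v' + Sq Amat v' u) =
      ∑ i : Fin (m + 2), b.repr u i *
        ((Sq p (b i) v' + Sq p v' (b i)) - aT * (Sq Amat (b i) v' + Sq Amat v' (b i))) := by
    intro u v'
    conv_lhs => rw [hv u]
    simp only [Sq_sum_left, Sq_sum_right, Sq_smul_left, Sq_smul_right, Finset.mul_sum,
      ← Finset.sum_add_distrib, ← Finset.sum_sub_distrib]
    exact Finset.sum_congr rfl fun i _ => by ring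
  have main : ∀ u v', (Sq p u v' + Sq p v' u) - aT * (Sq Amat u v' + Sq Amat v' u) =
      ∑ i : Fin m, b.repr u i.succ.succ *
        ((Sq p (E i) v' + Sq p v' (E i)) - aT * (Sq Amat (E i) v' + Sq Amat v' (E i))) := by
    intro u v'
    rw [expand1 u v', Fin.sum_univ_succ, Fin.sum_univ_succ, hb0, hb1']
    simp only [hbE]
    rw [hTzv v', hTev v']
    simp only [mul_zero, zero_add]
  -- the functionals T(Eᵢ, ·) lie in the span of the Aₖ
  have φmem : ∀ i : Fin m, ∃ d : Fin m → ℝ, ∀ v,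
      (Sq p (E i) v + Sq p v (E i)) - aT * (Sq Amat (E i) v + Sq Amat v (E i)) =
        ∑ k, d k * A k v := by
    intro i
    set φ : (Fin (m + 2) → ℝ) →ₗ[ℝ] ℝ :=
      { toFun := fun v => (Sq p (E i) v + Sq p v (E i)) -
          aT * (Sq Amat (E i) v + Sq Amat v (E i)),
        map_add' := by
          intro x y
          simp only [Sq_add_left, Sq_add_right]
          ring
        map_smul' := by
          intro c x
          simp only [Sq_smul_left, Sq_smul_right, smul_eq_mul, RingHom.id_apply]
          ring } with hφdef
    have h1 : φ z = 0 := by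
      show (Sq p (E i) z + Sq p z (E i)) - aT * (Sq Amat (E i) z + Sq Amat z (E i)) = 0
      linear_combination hTzv (E i)
    have h2 : φ e = 0 := by
      show (Sq p (E i) e + Sq p e (E i)) - aT * (Sq Amat (E i) e + Sq Amat e (E i)) = 0
      linear_combination hTev (E i)
    obtain ⟨d, hd⟩ := (Submodule.mem_span_range_iff_exists_fun ℝ).1 (hAspan φ h1 h2)
    refine ⟨d, fun v => ?_⟩
    have h3 := DFunLike.congr_fun hd v
    simp only [LinearMap.sum_apply, LinearMap.smul_apply, smul_eq_mul] at h3
    exact h3.symm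
  choose dd hdd using φmem
  -- the coordinate combinations lie in the span of the Aₗ
  have ψmem : ∀ k : Fin m, ∃ c : Fin m → ℝ, ∀ v,
      ∑ i : Fin m, dd i k * b.repr v i.succ.succ = ∑ l, c l * A l v := by
    intro k
    set ψ : (Fin (m + 2) → ℝ) →ₗ[ℝ] ℝ := ∑ i : Fin m, dd i k • b.coord i.succ.succ with hψdef
    have hψapp : ∀ v, ψ v = ∑ i : Fin m, dd i k * b.repr v i.succ.succ := by
      intro v
      rw [hψdef]
      simp [LinearMap.sum_apply, LinearMap.smul_apply, Module.Basis.coord_apply, smul_eq_mul]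
    have hrz : b.repr z = Finsupp.single (0 : Fin (m + 2)) 1 := by
      rw [← hb0]; exact b.repr_self 0
    have hre : b.repr e = Finsupp.single (1 : Fin (m + 2)) 1 := by
      rw [← hb1]; exact b.repr_self 1
    have hone : ∀ i : Fin m, (1 : Fin (m + 2)) ≠ i.succ.succ := by
      intro i h
      rw [← Fin.succ_zero_eq_one] at h
      exact Fin.succ_ne_zero i (Fin.succ_injective _ h).symm
    have h1 : ψ z = 0 := by
      rw [hψapp]
      refine Finset.sum_eq_zero fun i _ => ?_
      rw [hrz, Finsupp.single_eq_of_ne' (Ne.symm (Fin.succ_ne_zero _)), mul_zero]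
    have h2 : ψ e = 0 := by
      rw [hψapp]
      refine Finset.sum_eq_zero fun i _ => ?_
      rw [hre, Finsupp.single_eq_of_ne' (hone i), mul_zero]
    obtain ⟨c, hc⟩ := (Submodule.mem_span_range_iff_exists_fun ℝ).1 (hAspan ψ h1 h2)
    refine ⟨c, fun v => ?_⟩
    have h3 := DFunLike.congr_fun hc v
    simp only [LinearMap.sum_apply, LinearMap.smul_apply, smul_eq_mul] at h3
    rw [← hψapp v]
    exact h3.symm
  choose cc hcc using ψmem
  -- final assembly
  refine ⟨aT, (fun i j => if i = j then cc i i / 2 else cc j i / 2 + cc i j / 2),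
    fun v => ?_⟩
  show Sq p v v = aT * R v + ∑ i, ∑ j,
    if i ≤ j then (if i = j then cc i i / 2 else cc j i / 2 + cc i j / 2) * A i v * A j v else 0
  have hRv : R v = Sq Amat v v := hR v
  rw [hRv]
  have hTv : (Sq p v v + Sq p v v) - aT * (Sq Amat v v + Sq Amat v v) =
      ∑ k, ∑ l, cc k l * A l v * A k v := by
    calc (Sq p v v + Sq p v v) - aT * (Sq Amat v v + Sq Amat v v)
        = ∑ i : Fin m, b.repr v i.succ.succ * ∑ k, dd i k * A k v := by
          rw [main v v]
          exact Finset.sum_congr rfl fun i _ => by rw [hdd]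
      _ = ∑ k : Fin m, (∑ i : Fin m, dd i k * b.repr v i.succ.succ) * A k v := by
          simp only [Finset.mul_sum, Finset.sum_mul]
          rw [Finset.sum_comm]
          exact Finset.sum_congr rfl fun k _ => Finset.sum_congr rfl fun i _ => by ring
      _ = ∑ k : Fin m, (∑ l, cc k l * A l v) * A k v :=
          Finset.sum_congr rfl fun k _ => by rw [hcc]
      _ = ∑ k, ∑ l, cc k l * A l v * A k v :=
          Finset.sum_congr rfl fun k _ => by rw [Finset.sum_mul]
  have hA' : (1 / 2 : ℝ) * (∑ k, ∑ l, cc k l * A l v * A k v) =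
      ∑ i, ∑ j, (cc j i / 2) * A i v * A j v := by
    simp only [Finset.mul_sum]
    rw [Finset.sum_comm]
    exact Finset.sum_congr rfl fun i _ => Finset.sum_congr rfl fun j _ => by ring
  have h2 : ∑ i, ∑ j, ((cc j i / 2) * A i v * A j v) =
      ∑ i, ∑ j, (if i ≤ j then
        (if i = j then cc i i / 2 else cc j i / 2 + cc i j / 2) * A i v * A j v else 0) := by
    rw [sum_fold (fun i j => (cc j i / 2) * A i v * A j v)]
    refine Finset.sum_congr rfl fun i _ => Finset.sum_congr rfl fun j _ => ?_
    by_cases hij : i ≤ j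
    · simp only [hij, if_true]
      by_cases hij2 : i = j
      · subst hij2
        simp
      · simp only [hij2, if_false]
        ring
    · simp [hij]
  have hIte : ∑ i, ∑ j, (if i ≤ j then
      (if i = j then cc i i / 2 else cc j i / 2 + cc i j / 2) * A i v * A j v else 0) =
      (1 / 2 : ℝ) * (∑ k, ∑ l, cc k l * A l v * A k v) := h2.symm.trans hA'.symm
  linear_combination (1 / 2 : ℝ) * hTv - hIte
end
end
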